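/- Let $G$ be a finite group, $K \trianglelefteq G$, and $x \in G$ with $\gcd(|x|, |K|) = 1$. Then the centralizer of $xK$ in $G/K$ equals the image $C_G(x)K/K$ of $C_G(x)$ in $G/K$. -/

import Mathlib

open Subgroup QuotientGroup

universe u

open scoped commutatorElement in
private lemma mk_commute_iff {G : Type*} [Group G] (K : Subgroup G) [K.Normal] (a b : G) :
    Commute ((a : G ⧸ K)) (b : G ⧸ K) ↔ a * b * a⁻¹ * b⁻¹ ∈ K := by
  rw [← commutatorElement_eq_one_iff_commute, ← QuotientGroup.eq_one_iff]
  have h1 : ⁅(a : G ⧸ K), (b : G ⧸ K)⁆ = ((a * b * a⁻¹ * b⁻¹ : G) : G ⧸ K) := by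
    simp [commutatorElement_def]
  rw [h1]

/-- Prime power order case: fixed point argument. -/
private lemma aux_p {G : Type*} [Group G] [Finite G] (K : Subgroup G) [K.Normal]
    {p e : ℕ} (hp : p.Prime) (x g : G) (hx : x ^ p ^ e = 1)
    (hK : ¬ p ∣ Nat.card K) (h : Commute ((x : G ⧸ K)) (g : G ⧸ K)) :
    ∃ k ∈ K, Commute x (g * k) := by
  obtain ⟨f, -, hf⟩ := (Nat.dvd_prime_pow hp).mp (orderOf_dvd_of_pow_eq_one hx)
  have hP : IsPGroup p (Subgroup.zpowers x) :=
    IsPGroup.of_card (by rw [Nat.card_zpowers, hf])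
  have hcommP : ∀ u : Subgroup.zpowers x, Commute (((u : G) : G ⧸ K)) (g : G ⧸ K) := by
    rintro ⟨u, hu⟩
    obtain ⟨m, rfl⟩ := Subgroup.mem_zpowers_iff.mp hu
    simpa [QuotientGroup.mk_zpow] using h.zpow_left m
  letI Ω := {t : G // (t : G ⧸ K) = (g : G ⧸ K)}
  letI : MulAction (Subgroup.zpowers x) Ω :=
    { smul := fun u t => ⟨(u : G) * (t : G) * (u : G)⁻¹, by
        have h1 : (((u : G) : G ⧸ K)) * g * ((u : G) : G ⧸ K)⁻¹ = (g : G ⧸ K) := by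
          rw [(hcommP u).eq, mul_inv_cancel_right]
        calc (((u : G) * (t : G) * (u : G)⁻¹ : G) : G ⧸ K)
            = (((u : G) : G ⧸ K)) * ((t : G) : G ⧸ K) * ((u : G) : G ⧸ K)⁻¹ := rfl
          _ = (g : G ⧸ K) := by rw [t.2]; exact h1⟩
      one_smul := fun t => Subtype.ext (by
        show ((1 : Subgroup.zpowers x) : G) * t * ((1 : Subgroup.zpowers x) : G)⁻¹ = t
        simp)
      mul_smul := fun u v t => Subtype.ext (by
        show ((u * v : Subgroup.zpowers x) : G) * t * ((u * v : Subgroup.zpowers x) : G)⁻¹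
            = (u : G) * ((v : G) * t * (v : G)⁻¹) * (u : G)⁻¹
        rw [Subgroup.coe_mul]
        group) }
  have hcard : Nat.card Ω = Nat.card K := by
    refine Nat.card_congr ⟨fun t => ⟨g⁻¹ * t, (QuotientGroup.eq ).mp t.2.symm⟩,
      fun k => ⟨g * k, ?_⟩, fun t => Subtype.ext (by simp), fun k => Subtype.ext (by simp)⟩
    have : ((k : G) : G ⧸ K) = 1 := (QuotientGroup.eq_one_iff _).mpr k.2
    rw [QuotientGroup.mk_mul, this, mul_one]
  haveI : Fact p.Prime := ⟨hp⟩
  obtain ⟨a, hafix⟩ := hP.nonempty_fixed_point_of_prime_not_dvd_card Ω (by rwa [hcard])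
  have hxa : x * (a : G) * x⁻¹ = (a : G) :=
    congrArg Subtype.val (MulAction.mem_fixedPoints.mp hafix ⟨x, Subgroup.mem_zpowers x⟩)
  refine ⟨g⁻¹ * a, (QuotientGroup.eq ).mp a.2.symm, ?_⟩
  rw [mul_inv_cancel_left]
  show x * (a : G) = (a : G) * x
  conv_rhs => rw [← hxa]
  group


private lemma key_lemma (n : ℕ) : ∀ {G : Type u} [Group G] [Finite G] (K : Subgroup G)
    [K.Normal] (x g : G), orderOf x = n → n.Coprime (Nat.card K) →
    Commute ((x : G ⧸ K)) (g : G ⧸ K) → ∃ k ∈ K, Commute x (g * k) := by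
  induction n using Nat.strong_induction_on with
  | _ n ih =>
  intro G _ _ K _ x g hxn hcop h
  have hn0 : n ≠ 0 := by
    rw [← hxn]; exact (orderOf_pos x).ne'
  by_cases hn1 : n = 1
  · subst hn1
    have hx1 : x = 1 := orderOf_eq_one_iff.mp hxn
    exact ⟨1, K.one_mem, by simp [hx1, Commute.one_left]⟩
  -- pick a prime factor p of n
  set p := n.minFac with hpdef
  have hp : p.Prime := Nat.minFac_prime hn1
  set e := n.factorization p with hedef
  set m' := n / p ^ e with hm'def
  have hne : p ^ e * m' = n := Nat.ordProj_mul_ordCompl_eq_self n p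
  have he1 : e ≠ 0 := by
    have := (Nat.Prime.factorization_pos_of_dvd hp hn0 (Nat.minFac_dvd n))
    omega
  have hpe1 : 1 < p ^ e := Nat.one_lt_pow he1 hp.one_lt
  have hm'0 : m' ≠ 0 := by
    intro hc; rw [hc, mul_zero] at hne; exact hn0 hne.symm
  have hm'lt : m' < n := Nat.div_lt_self (Nat.pos_of_ne_zero hn0) hpe1
  have hcop_pm : Nat.Coprime m' (p ^ e) :=
    ((Nat.coprime_ordCompl hp hn0).pow_left e).symm
  obtain ⟨u, -, hu⟩ := Nat.exists_mul_mod_eq_one_of_coprime hcop_pm hpe1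
  have hv := Nat.div_add_mod (m' * u) (p ^ e)
  set v := m' * u / p ^ e with hvdef
  have hbez : m' * u = p ^ e * v + 1 := by omega
  set A := x ^ (m' * u) with hAdef
  set B := x ^ (p ^ e * v) with hBdef
  have hABx : A = B * x := by rw [hAdef, hBdef, hbez, pow_succ]
  have hAord : A ^ p ^ e = 1 := by
    rw [hAdef, ← pow_mul, show m' * u * p ^ e = n * u by rw [← hne]; ring,
      pow_mul, ← hxn, pow_orderOf_eq_one, one_pow]
  have hBord : B ^ m' = 1 := by
    rw [hBdef, ← pow_mul, show p ^ e * v * m' = n * v by rw [← hne]; ring,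
      pow_mul, ← hxn, pow_orderOf_eq_one, one_pow]
  have hpK : ¬ p ∣ Nat.card K := by
    rw [← hp.coprime_iff_not_dvd]
    exact Nat.Coprime.coprime_dvd_left (Nat.minFac_dvd n) hcop
  -- step 1: fix the p-part A
  have hcommA : Commute ((A : G ⧸ K)) (g : G ⧸ K) := by
    rw [hAdef, QuotientGroup.mk_pow]; exact h.pow_left _
  obtain ⟨k₁, hk₁K, hc₁⟩ := aux_p K hp A g hAord hpK hcommA
  set g₁ := g * k₁ with hg₁def
  -- step 2: recurse in the centralizer of A
  set H := Subgroup.centralizer {A} with hHdef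
  have hg₁H : g₁ ∈ H := Subgroup.mem_centralizer_singleton_iff.mpr hc₁.symm
  have hBH : B ∈ H := Subgroup.mem_centralizer_singleton_iff.mpr
    (((Commute.refl x).pow_pow _ _).symm)
  haveI : (K.subgroupOf H).Normal := Subgroup.Normal.subgroupOf inferInstance H
  set B' : H := ⟨B, hBH⟩ with hB'def
  set g₁' : H := ⟨g₁, hg₁H⟩ with hg₁'def
  have hordB' : orderOf B' = orderOf B := Subgroup.orderOf_mk B hBH
  have hordBdvd : orderOf B ∣ m' := orderOf_dvd_of_pow_eq_one hBord
  have hlt : orderOf B' < n := by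
    rw [hordB']
    exact lt_of_le_of_lt (Nat.le_of_dvd (Nat.pos_of_ne_zero hm'0) hordBdvd) hm'lt
  have hcardK' : Nat.card (K.subgroupOf H) ∣ Nat.card K := by
    have heq : Nat.card (K.subgroupOf H) = Nat.card ((K.subgroupOf H).map H.subtype) :=
      Nat.card_congr (Subgroup.equivMapOfInjective _ _ H.subtype_injective).toEquiv
    rw [heq, Subgroup.subgroupOf_map_subtype]
    exact Subgroup.card_dvd_of_le inf_le_left
  have hcop₂ : (orderOf B').Coprime (Nat.card (K.subgroupOf H)) := by
    rw [hordB']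
    exact Nat.Coprime.coprime_dvd_right hcardK'
      (Nat.Coprime.coprime_dvd_left (dvd_trans hordBdvd ⟨p ^ e, by rw [← hne]; ring⟩) hcop)
  have hmkg₁ : ((g₁ : G) : G ⧸ K) = (g : G ⧸ K) := by
    rw [hg₁def, QuotientGroup.mk_mul, (QuotientGroup.eq_one_iff _).mpr hk₁K, mul_one]
  have hcommB' : Commute ((B' : H ⧸ K.subgroupOf H)) (g₁' : H ⧸ K.subgroupOf H) := by
    rw [mk_commute_iff]
    rw [Subgroup.mem_subgroupOf]
    have : ((B' * g₁' * B'⁻¹ * g₁'⁻¹ : H) : G) = B * g₁ * B⁻¹ * g₁⁻¹ := rfl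
    rw [this, ← mk_commute_iff, hBdef, QuotientGroup.mk_pow, hmkg₁]
    exact h.pow_left _
  obtain ⟨k', hk'K, hc'⟩ := ih (orderOf B') hlt (K.subgroupOf H) B' g₁' rfl hcop₂ hcommB'
  refine ⟨k₁ * (k' : H), K.mul_mem hk₁K (Subgroup.mem_subgroupOf.mp hk'K), ?_⟩
  have hcB : Commute B (g₁ * (k' : H)) := congrArg Subtype.val hc'
  have hcA : Commute A (g₁ * (k' : H)) := by
    refine hc₁.mul_right ?_
    exact (Subgroup.mem_centralizer_singleton_iff.mp (k' : H).2).symm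
  have hx_eq : x = B⁻¹ * A := by rw [hABx]; group
  have : Commute x (g₁ * (k' : H)) := by
    rw [hx_eq]; exact (hcB.inv_left).mul_left hcA
  rw [hg₁def] at this
  rwa [mul_assoc] at this

theorem centralizer_quotient_eq_map {G : Type*} [Group G] [Finite G]
    (K : Subgroup G) [K.Normal] (x : G)
    (hcop : Nat.Coprime (orderOf x) (Nat.card K)) :
    Subgroup.centralizer {(x : G ⧸ K)} =
      (Subgroup.centralizer {x}).map (QuotientGroup.mk' K) := by
  apply le_antisymm
  · intro q hq
    obtain ⟨g, rfl⟩ := QuotientGroup.mk_surjective q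
    have h : Commute ((x : G ⧸ K)) (g : G ⧸ K) :=
      ((Subgroup.mem_centralizer_singleton_iff.mp hq).symm)
    obtain ⟨k, hkK, hc⟩ := key_lemma (orderOf x) K x g rfl hcop h
    refine ⟨g * k, Subgroup.mem_centralizer_singleton_iff.mpr hc.symm, ?_⟩
    show ((g * k : G) : G ⧸ K) = (g : G ⧸ K)
    rw [QuotientGroup.mk_mul, (QuotientGroup.eq_one_iff _).mpr hkK, mul_one]
  · rintro q ⟨c, hc, rfl⟩
    have hcx : c * x = x * c := Subgroup.mem_centralizer_singleton_iff.mp hc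
    refine Subgroup.mem_centralizer_singleton_iff.mpr ?_
    show ((c : G) : G ⧸ K) * (x : G ⧸ K) = (x : G ⧸ K) * ((c : G) : G ⧸ K)
    rw [← QuotientGroup.mk_mul, ← QuotientGroup.mk_mul, hcx]
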